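/- Let ρ̄, ρ be nonnegative integrable functions on a measure space Ω with ∫ρ̄ = ∫ρ = 1, γ = 1+2/d, and suppose ρ ∈ L^∞. If ∫H(ρ̄|ρ) ≤ δ and ‖ρ̄-ρ‖_{L^p} ≤ δ for some p ∈ (1,γ) with conjugate exponent p', then ∫_Ω |ρ̄^γ - ρ^γ| dx ≤ (γ-1)δ + γ δ ‖ρ^{γ-1}‖_{L^{p'}}. -/

import Mathlib

open MeasureTheory Real

private lemma bern_rpow {γ : ℝ} (hγ : 1 < γ) {a b : ℝ} (ha : 0 ≤ a) (hb : 0 ≤ b) :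
    b ^ γ + γ * b ^ (γ - 1) * (a - b) ≤ a ^ γ := by
  rcases eq_or_lt_of_le hb with hb0 | hb0
  · rw [← hb0, Real.zero_rpow (by linarith : γ ≠ 0),
      Real.zero_rpow (by intro hc; rw [sub_eq_zero] at hc; exact (hγ.ne hc.symm))]
    simpa using Real.rpow_nonneg ha γ
  · have hx : -1 ≤ (a - b) / b := by
      rw [neg_le, ← neg_div, div_le_one hb0]; linarith
    have h := one_add_mul_self_le_rpow_one_add hx hγ.le
    have h1 : 1 + (a - b) / b = a / b := by field_simp; ring
    rw [h1, Real.div_rpow ha hb0.le] at h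
    have hbγ : 0 < b ^ γ := Real.rpow_pos_of_pos hb0 γ
    have h2 := mul_le_mul_of_nonneg_left h hbγ.le
    have hbg1 : b ^ γ / b = b ^ (γ - 1) := by
      rw [Real.rpow_sub hb0, Real.rpow_one]
    calc b ^ γ + γ * b ^ (γ - 1) * (a - b)
        = b ^ γ * (1 + γ * ((a - b) / b)) := by
          rw [← hbg1]; field_simp
      _ ≤ b ^ γ * (a ^ γ / b ^ γ) := h2
      _ = a ^ γ := by field_simp

/-- Convergence of the pressure term: if `∫ H(ρ̄|ρ) ≤ δ` and `‖ρ̄-ρ‖_{L^p} ≤ δ` with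
`p ∈ (1,γ)`, `γ = 1 + 2/d`, `1/p + 1/p' = 1`, then
`∫ |ρ̄^γ - ρ^γ| ≤ (γ-1)δ + γ δ ‖ρ^{γ-1}‖_{L^{p'}}`. -/
theorem pressure_difference_bound {Ω : Type*} [MeasurableSpace Ω] (μ : Measure Ω)
    (d : ℕ) (hd : 1 ≤ d) (γ : ℝ) (hγ : γ = 1 + 2/(d:ℝ))
    (ρb ρ : Ω → ℝ) (hρb0 : ∀ x, 0 ≤ ρb x) (hρ0 : ∀ x, 0 ≤ ρ x)
    (hmb : Measurable ρb) (hm : Measurable ρ)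
    (hib : Integrable ρb μ) (hi : Integrable ρ μ)
    (h1b : (∫ x, ρb x ∂μ) = 1) (h1 : (∫ x, ρ x ∂μ) = 1)
    (hrinf : MemLp ρ ⊤ μ)
    (δ p p' : ℝ) (hδ : 0 ≤ δ) (hp1 : 1 < p) (hpγ : p < γ) (hp' : 1/p + 1/p' = 1)
    (hH : (∫⁻ x, ENNReal.ofReal
        ((1/(γ-1)) * (ρb x ^ γ - ρ x ^ γ + γ*(ρ x - ρb x)*ρ x ^ (γ-1))) ∂μ) ≤
      ENNReal.ofReal δ)
    (hLp : eLpNorm (fun x => ρb x - ρ x) (ENNReal.ofReal p) μ ≤ ENNReal.ofReal δ) :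
    (∫⁻ x, ENNReal.ofReal |ρb x ^ γ - ρ x ^ γ| ∂μ) ≤
      ENNReal.ofReal ((γ-1)*δ + γ*δ*
        ((eLpNorm (fun x => ρ x ^ (γ-1)) (ENNReal.ofReal p') μ).toReal)) := by
  have hd0 : (0:ℝ) < d := by exact_mod_cast hd
  have hγ1 : 1 < γ := by
    rw [hγ]
    have : 0 < 2/(d:ℝ) := by positivity
    linarith
  have hγ0 : 0 < γ - 1 := by linarith
  have hp0 : 0 < p := by linarith
  have hp'pos : 0 < p' := by
    have h1' : 0 < 1/p' := by
      have : 1/p < 1 := by rw [div_lt_one hp0]; exact hp1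
      linarith
    exact (one_div_pos).mp h1'
  have hpq : p.HolderConjugate p' := Real.holderConjugate_iff.mpr ⟨hp1, by simpa [one_div] using hp'⟩
  have hpeq : p' * (p - 1) = p := by
    have h1' : 1/p' = 1 - 1/p := by linarith
    field_simp at h1'
    linarith
  set s : ℝ := (γ - 1) * p' with hs
  have hs1 : 1 < s := by
    have h2 : (p - 1) * p' < (γ - 1) * p' :=
      mul_lt_mul_of_pos_right (by linarith) hp'pos
    nlinarith
  set hfun : Ω → ℝ := fun x =>
    (1/(γ-1)) * (ρb x ^ γ - ρ x ^ γ + γ*(ρ x - ρb x)*ρ x ^ (γ-1)) with hhfun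
  set g : Ω → ℝ := fun x => |ρb x - ρ x| * ρ x ^ (γ - 1) with hg
  have hhnn : ∀ x, 0 ≤ hfun x := by
    intro x
    have hb := bern_rpow hγ1 (hρb0 x) (hρ0 x)
    have h2 : γ*(ρ x - ρb x)*ρ x ^(γ-1) = -(γ * ρ x ^(γ-1) * (ρb x - ρ x)) := by ring
    have h3 : 0 ≤ ρb x ^ γ - ρ x ^ γ + γ*(ρ x - ρb x)*ρ x ^ (γ-1) := by
      rw [h2]; nlinarith [hb]
    have h4 : 0 < 1/(γ-1) := by positivity
    simp only [hhfun]
    exact mul_nonneg h4.le h3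
  have hgnn : ∀ x, 0 ≤ g x := fun x =>
    mul_nonneg (abs_nonneg _) (Real.rpow_nonneg (hρ0 x) _)
  have hkey : ∀ x, |ρb x ^ γ - ρ x ^ γ| ≤ (γ-1) * hfun x + γ * g x := by
    intro x
    have hid : ρb x ^ γ - ρ x ^ γ
        = (γ-1) * hfun x + γ * (ρb x - ρ x) * ρ x ^ (γ-1) := by
      simp only [hhfun]
      field_simp
      ring
    rw [hid]
    have hA : 0 ≤ (γ-1) * hfun x := mul_nonneg hγ0.le (hhnn x)
    calc |(γ-1) * hfun x + γ * (ρb x - ρ x) * ρ x ^ (γ-1)|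
        ≤ |(γ-1) * hfun x| + |γ * (ρb x - ρ x) * ρ x ^ (γ-1)| := abs_add_le _ _
      _ = (γ-1) * hfun x + γ * g x := by
          rw [abs_of_nonneg hA, abs_mul, abs_mul,
            abs_of_nonneg (by linarith : (0:ℝ) ≤ γ),
            abs_of_nonneg (Real.rpow_nonneg (hρ0 x) _)]
          simp only [hg]; ring
  have hmh : Measurable hfun := by
    simp only [hhfun]; fun_prop
  have hmg : Measurable g := by
    simp only [hg]; fun_prop
  set F : Ω → ENNReal := fun x => ENNReal.ofReal |ρb x - ρ x| with hF
  set G : Ω → ENNReal := fun x => ENNReal.ofReal (ρ x ^ (γ - 1)) with hG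
  have hmF : Measurable F := by simp only [hF]; fun_prop
  have hmG : Measurable G := by simp only [hG]; fun_prop
  set N : ENNReal := eLpNorm (fun x => ρ x ^ (γ-1)) (ENNReal.ofReal p') μ with hN
  have hNP : (∫⁻ x, G x ^ p' ∂μ) ^ (1/p') = N := by
    rw [hN, eLpNorm_eq_lintegral_rpow_enorm_toReal
      (by simp [ENNReal.ofReal_eq_zero]; linarith) ENNReal.ofReal_ne_top,
      ENNReal.toReal_ofReal hp'pos.le]
    congr 1
    refine lintegral_congr fun x => ?_
    rw [hG, Real.enorm_eq_ofReal_abs, abs_of_nonneg (Real.rpow_nonneg (hρ0 x) _)]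
  have hFP : (∫⁻ x, F x ^ p ∂μ) ^ (1/p)
      = eLpNorm (fun x => ρb x - ρ x) (ENNReal.ofReal p) μ := by
    rw [eLpNorm_eq_lintegral_rpow_enorm_toReal
      (by simp [ENNReal.ofReal_eq_zero]; linarith) ENNReal.ofReal_ne_top,
      ENNReal.toReal_ofReal hp0.le]
    congr 1
    refine lintegral_congr fun x => ?_
    rw [hF, Real.enorm_eq_ofReal_abs]
  -- finiteness of N
  have hNfin : N ≠ ⊤ := by
    have hC : eLpNormEssSup ρ μ ≠ ⊤ := by
      have := hrinf.2
      rwa [eLpNorm_exponent_top, lt_top_iff_ne_top] at this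
    set M : ℝ := max (eLpNormEssSup ρ μ).toReal 1 with hM
    have hM1 : (1:ℝ) ≤ M := le_max_right _ _
    have hae : ∀ᵐ x ∂μ, ρ x ≤ M := by
      filter_upwards [enorm_ae_le_eLpNormEssSup ρ μ] with x hx
      have h2 : ‖ρ x‖ ≤ (eLpNormEssSup ρ μ).toReal := by
        have := ENNReal.toReal_mono hC hx
        simpa using this
      have h3 : ρ x ≤ ‖ρ x‖ := le_abs_self _
      exact le_trans (h3.trans h2) (le_max_left _ _)
    have hptw : ∀ᵐ x ∂μ, G x ^ p' ≤ ENNReal.ofReal (M ^ (s-1) * ρ x) := by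
      filter_upwards [hae] with x hx
      have hGx : G x ^ p' = ENNReal.ofReal (ρ x ^ s) := by
        rw [hG, ENNReal.ofReal_rpow_of_nonneg (Real.rpow_nonneg (hρ0 x) _) hp'pos.le,
          ← Real.rpow_mul (hρ0 x), ← hs]
      rw [hGx]
      apply ENNReal.ofReal_le_ofReal
      rcases eq_or_lt_of_le (hρ0 x) with h0 | h0
      · rw [← h0, Real.zero_rpow (by linarith : s ≠ 0), mul_zero]
      · have hsplit : ρ x ^ s = ρ x ^ (s-1) * ρ x := by
          rw [← Real.rpow_add_one h0.ne' (s-1), sub_add_cancel]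
        rw [hsplit]
        exact mul_le_mul_of_nonneg_right
          (Real.rpow_le_rpow (hρ0 x) hx (by linarith)) h0.le
    have hint : (∫⁻ x, G x ^ p' ∂μ) ≠ ⊤ := by
      have hb1 : (∫⁻ x, G x ^ p' ∂μ) ≤ ∫⁻ x, ENNReal.ofReal (M ^ (s-1) * ρ x) ∂μ :=
        lintegral_mono_ae hptw
      have hb2 : (∫⁻ x, ENNReal.ofReal (M ^ (s-1) * ρ x) ∂μ)
          = ENNReal.ofReal (M ^ (s-1)) * ∫⁻ x, ENNReal.ofReal (ρ x) ∂μ := by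
        simp_rw [ENNReal.ofReal_mul (Real.rpow_nonneg (by linarith : (0:ℝ) ≤ M) _)]
        exact lintegral_const_mul _ (by fun_prop)
      have hb3 : (∫⁻ x, ENNReal.ofReal (ρ x) ∂μ) ≠ ⊤ := by
        have := hi.2
        rw [hasFiniteIntegral_iff_ofReal (ae_of_all μ hρ0)] at this
        exact this.ne
      refine ne_top_of_le_ne_top ?_ hb1
      rw [hb2]
      exact ENNReal.mul_ne_top ENNReal.ofReal_ne_top hb3
    rw [← hNP]
    exact (ENNReal.rpow_lt_top_of_nonneg (by positivity) hint).ne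
  -- Hölder
  have hHold : (∫⁻ x, ENNReal.ofReal (g x) ∂μ) ≤ ENNReal.ofReal δ * N := by
    have h0 : ∀ x, ENNReal.ofReal (g x) = (F * G) x := by
      intro x
      simp only [hg, hF, hG, Pi.mul_apply]
      rw [ENNReal.ofReal_mul (abs_nonneg _)]
    calc (∫⁻ x, ENNReal.ofReal (g x) ∂μ) = ∫⁻ x, (F * G) x ∂μ :=
          lintegral_congr h0
      _ ≤ (∫⁻ x, F x ^ p ∂μ) ^ (1/p) * (∫⁻ x, G x ^ p' ∂μ) ^ (1/p') :=
          ENNReal.lintegral_mul_le_Lp_mul_Lq μ hpq hmF.aemeasurable hmG.aemeasurable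
      _ = eLpNorm (fun x => ρb x - ρ x) (ENNReal.ofReal p) μ * N := by
          rw [hFP, hNP]
      _ ≤ ENNReal.ofReal δ * N := mul_le_mul_left hLp N
  -- main chain
  calc (∫⁻ x, ENNReal.ofReal |ρb x ^ γ - ρ x ^ γ| ∂μ)
      ≤ ∫⁻ x, (ENNReal.ofReal ((γ-1) * hfun x) + ENNReal.ofReal (γ * g x)) ∂μ := by
        refine lintegral_mono fun x => ?_
        rw [← ENNReal.ofReal_add (mul_nonneg hγ0.le (hhnn x))
          (mul_nonneg (by linarith) (hgnn x))]
        exact ENNReal.ofReal_le_ofReal (hkey x)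
    _ = (∫⁻ x, ENNReal.ofReal ((γ-1) * hfun x) ∂μ)
        + ∫⁻ x, ENNReal.ofReal (γ * g x) ∂μ :=
        lintegral_add_left (by fun_prop) _
    _ ≤ ENNReal.ofReal ((γ-1)*δ) + ENNReal.ofReal γ * (ENNReal.ofReal δ * N) := by
        refine add_le_add ?_ ?_
        · have e1 : (∫⁻ x, ENNReal.ofReal ((γ-1) * hfun x) ∂μ)
              = ENNReal.ofReal (γ-1) * ∫⁻ x, ENNReal.ofReal (hfun x) ∂μ := by
            simp_rw [ENNReal.ofReal_mul hγ0.le]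
            exact lintegral_const_mul _ (by fun_prop)
          rw [e1, ENNReal.ofReal_mul hγ0.le]
          exact mul_le_mul_right hH _
        · have e2 : (∫⁻ x, ENNReal.ofReal (γ * g x) ∂μ)
              = ENNReal.ofReal γ * ∫⁻ x, ENNReal.ofReal (g x) ∂μ := by
            simp_rw [ENNReal.ofReal_mul (by linarith : (0:ℝ) ≤ γ)]
            exact lintegral_const_mul _ (by fun_prop)
          rw [e2]
          exact mul_le_mul_right hHold _
    _ = ENNReal.ofReal ((γ-1)*δ + γ*δ*N.toReal) := by
        nth_rewrite 1 [← ENNReal.ofReal_toReal hNfin]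
        rw [← ENNReal.ofReal_mul hδ,
          ← ENNReal.ofReal_mul (by linarith : (0:ℝ) ≤ γ),
          ← ENNReal.ofReal_add (mul_nonneg hγ0.le hδ)
            (mul_nonneg (by linarith) (mul_nonneg hδ ENNReal.toReal_nonneg))]
        congr 1
        ring
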